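/- Every satisfiable HyperCTL* sentence has a model whose set of vertices has cardinality at most 𝔠, the cardinality of the continuum. -/

import Mathlib

/-! ### Transition systems and HyperCTL* -/

/-- A transition system over `AP`: every vertex has an outgoing edge. -/
structure TS (AP : Type) : Type 1 where
  V : Type
  E : V → V → Prop
  vI : V
  lab : V → Set AP
  succ : ∀ v, ∃ w, E v w

/-- A path through a transition system. -/
def TS.IsPath {AP : Type} (S : TS AP) (ρ : ℕ → S.V) : Prop :=
  ∀ i, S.E (ρ i) (ρ (i + 1))

/-- HyperCTL* formulas; path variables are natural numbers. -/
inductive CTL (AP : Type) : Type where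
  | atom : AP → ℕ → CTL AP
  | neg  : CTL AP → CTL AP
  | disj : CTL AP → CTL AP → CTL AP
  | next : CTL AP → CTL AP
  | untl : CTL AP → CTL AP → CTL AP
  | ex   : ℕ → CTL AP → CTL AP
  | all  : ℕ → CTL AP → CTL AP

/-- Semantics of HyperCTL* w.r.t. a path assignment `As` and the variable `r`
most recently added to the assignment: quantified paths start at the first
vertex of the most recently assigned path. -/
def CTL.sat {AP : Type} (S : TS AP) : CTL AP → (ℕ → ℕ → S.V) → ℕ → Prop
  | .atom a x, As, _ => a ∈ S.lab (As x 0)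
  | .neg φ, As, r => ¬ φ.sat S As r
  | .disj φ ψ, As, r => φ.sat S As r ∨ ψ.sat S As r
  | .next φ, As, r => φ.sat S (fun x i => As x (i + 1)) r
  | .untl φ ψ, As, r =>
      ∃ j, ψ.sat S (fun x i => As x (i + j)) r ∧
        ∀ j' < j, φ.sat S (fun x i => As x (i + j')) r
  | .ex x φ, As, r => ∃ ρ : ℕ → S.V, S.IsPath ρ ∧ ρ 0 = As r 0 ∧
      φ.sat S (Function.update As x ρ) x
  | .all x φ, As, r => ∀ ρ : ℕ → S.V, S.IsPath ρ → ρ 0 = As r 0 →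
      φ.sat S (Function.update As x ρ) x

def CTL.freeVars {AP : Type} : CTL AP → Set ℕ
  | .atom _ x => {x}
  | .neg φ => φ.freeVars
  | .disj φ ψ => φ.freeVars ∪ ψ.freeVars
  | .next φ => φ.freeVars
  | .untl φ ψ => φ.freeVars ∪ ψ.freeVars
  | .ex x φ => φ.freeVars \ {x}
  | .all x φ => φ.freeVars \ {x}

/-- Every temporal operator occurs in the scope of a path quantifier. -/
def CTL.guarded {AP : Type} : CTL AP → Prop
  | .atom _ _ => True
  | .neg φ => φ.guarded
  | .disj φ ψ => φ.guarded ∧ ψ.guarded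
  | .next _ => False
  | .untl _ _ => False
  | .ex _ _ => True
  | .all _ _ => True

/-- A HyperCTL* sentence: no free variables and all temporal operators occur
under a path quantifier. -/
def CTL.IsSentence {AP : Type} (φ : CTL AP) : Prop := φ.freeVars = ∅ ∧ φ.guarded

/-- `S ⊨ φ`: satisfaction w.r.t. the empty assignment, i.e. quantification of
the first path starts at the initial vertex (for sentences the choice of the
initial dummy path is irrelevant). -/
def CModels {AP : Type} (S : TS AP) (φ : CTL AP) : Prop :=
  ∀ ρ : ℕ → S.V, S.IsPath ρ → ρ 0 = S.vI → φ.sat S (fun _ => ρ) 0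

namespace Small

variable {AP : Type}

/-- subformula list -/
def subs : CTL AP → List (CTL AP)
  | .atom a x => [.atom a x]
  | .neg ψ => .neg ψ :: subs ψ
  | .disj ψ χ => .disj ψ χ :: (subs ψ ++ subs χ)
  | .next ψ => .next ψ :: subs ψ
  | .untl ψ χ => .untl ψ χ :: (subs ψ ++ subs χ)
  | .ex x ψ => .ex x ψ :: subs ψ
  | .all x ψ => .all x ψ :: subs ψ

lemma self_mem_subs (ψ : CTL AP) : ψ ∈ subs ψ := by
  cases ψ <;> simp [subs]

lemma subs_trans : ∀ {χ ψ : CTL AP}, ψ ∈ subs χ → subs ψ ⊆ subs χ := by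
  intro χ
  induction χ with
  | atom a x => intro ψ h; simp [subs] at h; subst h; simp [subs]
  | neg χ ih =>
      intro ψ h
      rcases List.mem_cons.1 h with h | h
      · subst h; exact fun _ h => h
      · exact fun τ hτ => List.mem_cons_of_mem _ (ih h hτ)
  | disj χ₁ χ₂ ih₁ ih₂ =>
      intro ψ h
      rcases List.mem_cons.1 h with h | h
      · subst h; exact fun _ h => h
      · rcases List.mem_append.1 h with h | h
        · exact fun τ hτ => List.mem_cons_of_mem _ (List.mem_append.2 (Or.inl (ih₁ h hτ)))
        · exact fun τ hτ => List.mem_cons_of_mem _ (List.mem_append.2 (Or.inr (ih₂ h hτ)))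
  | next χ ih =>
      intro ψ h
      rcases List.mem_cons.1 h with h | h
      · subst h; exact fun _ h => h
      · exact fun τ hτ => List.mem_cons_of_mem _ (ih h hτ)
  | untl χ₁ χ₂ ih₁ ih₂ =>
      intro ψ h
      rcases List.mem_cons.1 h with h | h
      · subst h; exact fun _ h => h
      · rcases List.mem_append.1 h with h | h
        · exact fun τ hτ => List.mem_cons_of_mem _ (List.mem_append.2 (Or.inl (ih₁ h hτ)))
        · exact fun τ hτ => List.mem_cons_of_mem _ (List.mem_append.2 (Or.inr (ih₂ h hτ)))
  | ex x χ ih =>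
      intro ψ h
      rcases List.mem_cons.1 h with h | h
      · subst h; exact fun _ h => h
      · exact fun τ hτ => List.mem_cons_of_mem _ (ih h hτ)
  | all x χ ih =>
      intro ψ h
      rcases List.mem_cons.1 h with h | h
      · subst h; exact fun _ h => h
      · exact fun τ hτ => List.mem_cons_of_mem _ (ih h hτ)

variable (S : TS AP)

/-- canonical initial path -/
noncomputable def rho0 : ℕ → S.V
  | 0 => S.vI
  | n+1 => (S.succ (rho0 n)).choose

lemma rho0_isPath : S.IsPath (rho0 S) := fun i => (S.succ (rho0 S i)).choose_spec

@[simp] lemma rho0_zero : rho0 S 0 = S.vI := rfl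

def splice (ρ σ : ℕ → S.V) (n : ℕ) : ℕ → S.V := fun j => if j < n then ρ j else σ (j - n)

lemma splice_isPath {ρ σ : ℕ → S.V} (hρ : S.IsPath ρ) (hσ : S.IsPath σ) {n : ℕ}
    (h : σ 0 = ρ n) : S.IsPath (splice S ρ σ n) := by
  intro i
  unfold splice
  rcases lt_trichotomy (i+1) n with h1 | h1 | h1
  · simp only [if_pos (Nat.lt_of_succ_lt h1), if_pos h1]; exact hρ i
  · simp only [if_pos (by omega : i < n), if_neg (by omega : ¬ i + 1 < n)]
    have : i + 1 - n = 0 := by omega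
    rw [this, h, ← h1]; exact hρ i
  · simp only [if_neg (by omega : ¬ i < n), if_neg (by omega : ¬ i + 1 < n)]
    have : i + 1 - n = (i - n) + 1 := by omega
    rw [this]; exact hσ (i - n)

lemma splice_isPath' {ρ σ : ℕ → S.V} (hρ : S.IsPath ρ) (hσ : S.IsPath σ) {n : ℕ}
    (h : σ 0 = ρ n) : ∀ j ≤ n, splice S ρ σ n j = ρ j := by
  intro j hj
  unfold splice
  rcases lt_or_eq_of_le hj with h1 | h1
  · rw [if_pos h1]
  · subst h1; simp [h]

lemma splice_suffix (ρ σ : ℕ → S.V) (n : ℕ) : ∀ k, splice S ρ σ n (n + k) = σ k := by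
  intro k; unfold splice; rw [if_neg (by omega)]; congr 1; omega

variable (φ : CTL AP)

open Classical in
noncomputable def Op (c : ℕ × ℕ × ℕ) (g : ℕ → ℕ → S.V) : ℕ → S.V :=
  match c with
  | (0, n, _) => fun i => g 0 (i + n)
  | (1, n, _) =>
      if S.IsPath (g 0) ∧ S.IsPath (g 1) ∧ g 1 0 = g 0 n then splice S (g 0) (g 1) n else g 0
  | (2, _, _) => if S.IsPath (fun j => g (j+1) j) then (fun j => g (j+1) j) else g 0
  | (3, k, r) =>
      match (subs φ).getD k φ with
      | CTL.ex x ψ =>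
          if h : ∃ ρ, S.IsPath ρ ∧ ρ 0 = g r 0 ∧ ψ.sat S (Function.update g x ρ) x then
            h.choose else g 0
      | _ => g 0
  | (4, k, r) =>
      match (subs φ).getD k φ with
      | CTL.all x ψ =>
          if h : ∃ ρ, S.IsPath ρ ∧ ρ 0 = g r 0 ∧ ¬ ψ.sat S (Function.update g x ρ) x then
            h.choose else g 0
      | _ => g 0
  | _ => g 0

lemma Op_isPath (c : ℕ × ℕ × ℕ) (g : ℕ → ℕ → S.V) (hg : ∀ k, S.IsPath (g k)) :
    S.IsPath (Op S φ c g) := by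
  obtain ⟨t, n, r⟩ := c
  match t with
  | 0 =>
      simp only [Op]
      intro i
      simpa [show i + 1 + n = i + n + 1 by omega] using hg 0 (i + n)
  | 1 =>
      simp only [Op]
      split
      · next h => exact splice_isPath S h.1 h.2.1 h.2.2
      · exact hg 0
  | 2 =>
      simp only [Op]
      split
      · next h => exact h
      · exact hg 0
  | 3 =>
      simp only [Op]
      rcases h : (subs φ).getD n φ with _|_|_|_|_|⟨x,ψ⟩|⟨x,ψ⟩ <;> simp only [h] <;>
        first
        | exact hg 0
        | (split
           · next hw => exact hw.choose_spec.1
           · exact hg 0)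
  | 4 =>
      simp only [Op]
      rcases h : (subs φ).getD n φ with _|_|_|_|_|⟨x,ψ⟩|⟨x,ψ⟩ <;> simp only [h] <;>
        first
        | exact hg 0
        | (split
           · next hw => exact hw.choose_spec.1
           · exact hg 0)
  | (m+5) => exact hg 0

/-- one closure step -/
def stepSet (X : Set (ℕ → S.V)) : Set (ℕ → S.V) :=
  {rho0 S} ∪ {p | ∃ c g, (∀ k : ℕ, g k ∈ X) ∧ p = Op S φ c g}

/-- stages of the closure, by transfinite recursion -/
noncomputable def A : Ordinal.{0} → Set (ℕ → S.V) :=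
  fun α => stepSet S φ (⋃ β : {β // β < α}, A β.1)
termination_by α => α
decreasing_by exact β.2

lemma A_eq (α : Ordinal.{0}) : A S φ α = stepSet S φ (⋃ β : {β // β < α}, A S φ β.1) := by
  rw [A]

/-- the path closure set -/
noncomputable def QS : Set (ℕ → S.V) :=
  ⋃ β : {β : Ordinal.{0} // β < (Cardinal.aleph 1).ord}, A S φ β.1

lemma rho0_mem_QS : rho0 S ∈ QS S φ := by
  refine Set.mem_iUnion.2 ⟨⟨0, ?_⟩, ?_⟩
  · rw [Cardinal.lt_ord]; simp
  · rw [A_eq]; exact Or.inl rfl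

lemma QS_closed (c : ℕ × ℕ × ℕ) (g : ℕ → ℕ → S.V) (hg : ∀ k, g k ∈ QS S φ) :
    Op S φ c g ∈ QS S φ := by
  choose β hmem using fun k => Set.mem_iUnion.1 (hg k)
  have hlt : ∀ k, (β k).1 < (Cardinal.aleph 1).ord := fun k => (β k).2
  have hsup : (⨆ k, (β k).1) < (Cardinal.aleph 1).ord := by
    refine Cardinal.iSup_lt_ord_of_isRegular Cardinal.isRegular_aleph_one ?_ hlt
    simpa using Cardinal.aleph0_lt_aleph_one
  have hblt : Order.succ (⨆ k, (β k).1) < (Cardinal.aleph 1).ord :=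
    (Cardinal.isSuccLimit_ord (Cardinal.aleph0_le_aleph 1)).succ_lt hsup
  refine Set.mem_iUnion.2 ⟨⟨Order.succ (⨆ k, (β k).1), hblt⟩, ?_⟩
  rw [A_eq]
  refine Or.inr ⟨c, g, fun k => ?_, rfl⟩
  refine Set.mem_iUnion.2 ⟨⟨(β k).1, ?_⟩, hmem k⟩
  exact (Order.lt_succ_iff_of_not_isMax (not_isMax _)).2 (Ordinal.le_iSup (fun k => (β k).1) k)

lemma QS_paths : ∀ ρ ∈ QS S φ, S.IsPath ρ := by
  have : ∀ α : Ordinal.{0}, ∀ ρ ∈ A S φ α, S.IsPath ρ := by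
    intro α
    induction α using Ordinal.induction with
    | _ α ih =>
      intro ρ hρ
      rw [A_eq] at hρ
      rcases hρ with h | ⟨c, g, hg, rfl⟩
      · rw [Set.mem_singleton_iff] at h; subst h; exact rho0_isPath S
      · refine Op_isPath S φ c g fun k => ?_
        obtain ⟨⟨β, hβ⟩, hmem⟩ := Set.mem_iUnion.1 (hg k)
        exact ih β hβ _ hmem
  intro ρ hρ
  obtain ⟨⟨β, _⟩, hmem⟩ := Set.mem_iUnion.1 hρ
  exact this β ρ hmem

lemma QS_suffix {ρ : ℕ → S.V} (hρ : ρ ∈ QS S φ) (n : ℕ) :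
    (fun i => ρ (i + n)) ∈ QS S φ := by
  have := QS_closed S φ (0, n, 0) (fun _ => ρ) (fun _ => hρ)
  simpa only [Op] using this

lemma QS_splice {ρ σ : ℕ → S.V} (hρ : ρ ∈ QS S φ) (hσ : σ ∈ QS S φ) {n : ℕ}
    (h : σ 0 = ρ n) : splice S ρ σ n ∈ QS S φ := by
  have := QS_closed S φ (1, n, 0) (fun k => if k = 0 then ρ else σ)
    (fun k => by split <;> assumption)
  simp only [Op, if_pos rfl, if_neg (one_ne_zero)] at this
  rwa [if_pos ⟨QS_paths S φ ρ hρ, QS_paths S φ σ hσ, h⟩] at this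

lemma QS_cl {u : ℕ → S.V} (h : ∀ m : ℕ, ∃ σ ∈ QS S φ, ∀ j < m, σ j = u j) :
    u ∈ QS S φ := by
  choose σ hσQ hσ using h
  have hlim : (fun j => σ (j+1) j) = u := by
    funext j; exact hσ (j+1) j (Nat.lt_succ_self j)
  have hupath : S.IsPath u := by
    intro j
    have h1 : σ (j+2) j = u j := hσ (j+2) j (by omega)
    have h2 : σ (j+2) (j+1) = u (j+1) := hσ (j+2) (j+1) (by omega)
    rw [← h1, ← h2]
    exact QS_paths S φ _ (hσQ (j+2)) j
  have := QS_closed S φ (2, 0, 0) σ hσQ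
  simp only [Op] at this
  rwa [hlim, if_pos hupath] at this

lemma subs_index {ψ : CTL AP} (h : ψ ∈ subs φ) : ∃ k, (subs φ).getD k φ = ψ := by
  obtain ⟨k, hk, he⟩ := List.getElem_of_mem h
  exact ⟨k, by rw [List.getD_eq_getElem _ _ hk]; exact he⟩

lemma QS_skolem_ex {x : ℕ} {ψ : CTL AP} (hmem : (CTL.ex x ψ) ∈ subs φ)
    (As : ℕ → ℕ → S.V) (r : ℕ) (hAs : ∀ v, As v ∈ QS S φ)
    (h : ∃ ρ, S.IsPath ρ ∧ ρ 0 = As r 0 ∧ ψ.sat S (Function.update As x ρ) x) :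
    ∃ ρ ∈ QS S φ, ρ 0 = As r 0 ∧ ψ.sat S (Function.update As x ρ) x := by
  obtain ⟨k, hk⟩ := subs_index φ hmem
  have hcl := QS_closed S φ (3, k, r) As hAs
  simp only [Op, hk] at hcl
  rw [dif_pos h] at hcl
  exact ⟨h.choose, hcl, h.choose_spec.2.1, h.choose_spec.2.2⟩

lemma QS_skolem_all {x : ℕ} {ψ : CTL AP} (hmem : (CTL.all x ψ) ∈ subs φ)
    (As : ℕ → ℕ → S.V) (r : ℕ) (hAs : ∀ v, As v ∈ QS S φ)
    (h : ∃ ρ, S.IsPath ρ ∧ ρ 0 = As r 0 ∧ ¬ ψ.sat S (Function.update As x ρ) x) :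
    ∃ ρ ∈ QS S φ, ρ 0 = As r 0 ∧ ¬ ψ.sat S (Function.update As x ρ) x := by
  obtain ⟨k, hk⟩ := subs_index φ hmem
  have hcl := QS_closed S φ (4, k, r) As hAs
  simp only [Op, hk] at hcl
  rw [dif_pos h] at hcl
  exact ⟨h.choose, hcl, h.choose_spec.2.1, h.choose_spec.2.2⟩

/-- relativized semantics: quantifiers range over Q -/
def satQ (Q : Set (ℕ → S.V)) : CTL AP → (ℕ → ℕ → S.V) → ℕ → Prop
  | .atom a x, As, _ => a ∈ S.lab (As x 0)
  | .neg ψ, As, r => ¬ satQ Q ψ As r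
  | .disj ψ χ, As, r => satQ Q ψ As r ∨ satQ Q χ As r
  | .next ψ, As, r => satQ Q ψ (fun x i => As x (i + 1)) r
  | .untl ψ χ, As, r =>
      ∃ j, satQ Q χ (fun x i => As x (i + j)) r ∧
        ∀ j' < j, satQ Q ψ (fun x i => As x (i + j')) r
  | .ex x ψ, As, r => ∃ ρ ∈ Q, ρ 0 = As r 0 ∧ satQ Q ψ (Function.update As x ρ) x
  | .all x ψ, As, r => ∀ ρ ∈ Q, ρ 0 = As r 0 → satQ Q ψ (Function.update As x ρ) x

lemma update_mem_QS {As : ℕ → ℕ → S.V} (hAs : ∀ v, As v ∈ QS S φ) {x : ℕ}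
    {ρ : ℕ → S.V} (hρ : ρ ∈ QS S φ) : ∀ v, Function.update As x ρ v ∈ QS S φ := by
  intro v
  rcases eq_or_ne v x with rfl | hv
  · rw [Function.update_self]; exact hρ
  · rw [Function.update_of_ne hv]; exact hAs v

lemma shift_mem_QS {As : ℕ → ℕ → S.V} (hAs : ∀ v, As v ∈ QS S φ) (j : ℕ) :
    ∀ v, (fun i => As v (i + j)) ∈ QS S φ :=
  fun v => QS_suffix S φ (hAs v) j

lemma reflect : ∀ ψ : CTL AP, ψ ∈ subs φ → ∀ (As : ℕ → ℕ → S.V) (r : ℕ),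
    (∀ v, As v ∈ QS S φ) → (satQ S (QS S φ) ψ As r ↔ ψ.sat S As r) := by
  intro ψ
  induction ψ with
  | atom a x => intro _ As r _; exact Iff.rfl
  | neg ψ ih =>
      intro h As r hAs
      exact not_congr (ih (subs_trans h (List.mem_cons_of_mem _ (self_mem_subs ψ))) As r hAs)
  | disj ψ χ ihψ ihχ =>
      intro h As r hAs
      have h1 : ψ ∈ subs φ :=
        subs_trans h (List.mem_cons_of_mem _ (List.mem_append.2 (Or.inl (self_mem_subs ψ))))
      have h2 : χ ∈ subs φ :=
        subs_trans h (List.mem_cons_of_mem _ (List.mem_append.2 (Or.inr (self_mem_subs χ))))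
      exact or_congr (ihψ h1 As r hAs) (ihχ h2 As r hAs)
  | next ψ ih =>
      intro h As r hAs
      exact ih (subs_trans h (List.mem_cons_of_mem _ (self_mem_subs ψ))) _ r
        (shift_mem_QS S φ hAs 1)
  | untl ψ χ ihψ ihχ =>
      intro h As r hAs
      have h1 : ψ ∈ subs φ :=
        subs_trans h (List.mem_cons_of_mem _ (List.mem_append.2 (Or.inl (self_mem_subs ψ))))
      have h2 : χ ∈ subs φ :=
        subs_trans h (List.mem_cons_of_mem _ (List.mem_append.2 (Or.inr (self_mem_subs χ))))
      refine exists_congr fun j => and_congr ?_ ?_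
      · exact ihχ h2 _ r (shift_mem_QS S φ hAs j)
      · exact forall_congr' fun j' => forall_congr' fun _ =>
          ihψ h1 _ r (shift_mem_QS S φ hAs j')
  | ex x ψ ih =>
      intro h As r hAs
      have h1 : ψ ∈ subs φ := subs_trans h (List.mem_cons_of_mem _ (self_mem_subs ψ))
      constructor
      · rintro ⟨ρ, hρQ, hρ0, hsat⟩
        exact ⟨ρ, QS_paths S φ ρ hρQ, hρ0,
          (ih h1 _ x (update_mem_QS S φ hAs hρQ)).1 hsat⟩
      · intro hex
        obtain ⟨ρ, hρQ, hρ0, hsat⟩ := QS_skolem_ex S φ h As r hAs hex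
        exact ⟨ρ, hρQ, hρ0, (ih h1 _ x (update_mem_QS S φ hAs hρQ)).2 hsat⟩
  | all x ψ ih =>
      intro h As r hAs
      have h1 : ψ ∈ subs φ := subs_trans h (List.mem_cons_of_mem _ (self_mem_subs ψ))
      constructor
      · intro hall
        by_contra hns
        simp only [CTL.sat, not_forall] at hns
        obtain ⟨ρ, hpath, hρ0, hsat⟩ := hns
        obtain ⟨ρ', hρ'Q, hρ'0, hsat'⟩ :=
          QS_skolem_all S φ h As r hAs ⟨ρ, hpath, hρ0, hsat⟩
        exact hsat' ((ih h1 _ x (update_mem_QS S φ hAs hρ'Q)).1 (hall ρ' hρ'Q hρ'0))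
      · intro hall ρ hρQ hρ0
        exact (ih h1 _ x (update_mem_QS S φ hAs hρQ)).2
          (hall ρ (QS_paths S φ ρ hρQ) hρ0)

lemma shift_isPath {S : TS AP} {ρ : ℕ → S.V} (h : S.IsPath ρ) (j : ℕ) :
    S.IsPath (fun i => ρ (i + j)) := by
  intro i
  simpa [show i + 1 + j = i + j + 1 by omega] using h (i + j)

/-- the small transition system -/
noncomputable def T' : TS AP where
  V := {ρ // ρ ∈ QS S φ} × ℕ
  E := fun p q => q.2 = p.2 + 1 ∧ ∀ j ≤ p.2, q.1.1 j = p.1.1 j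
  vI := (⟨rho0 S, rho0_mem_QS S φ⟩, 0)
  lab := fun p => S.lab (p.1.1 p.2)
  succ := fun p => ⟨(p.1, p.2 + 1), rfl, fun j _ => rfl⟩

def proj : (T' S φ).V → S.V := fun p => p.1.1 p.2

lemma Tpath_snd {τ : ℕ → (T' S φ).V} (hτ : (T' S φ).IsPath τ) :
    ∀ k, (τ k).2 = (τ 0).2 + k := by
  intro k
  induction k with
  | zero => rfl
  | succ k ih => rw [(hτ k).1, ih]; omega

lemma Tpath_agree {τ : ℕ → (T' S φ).V} (hτ : (T' S φ).IsPath τ) :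
    ∀ k k', k ≤ k' → ∀ j ≤ (τ 0).2 + k, (τ k').1.1 j = (τ k).1.1 j := by
  intro k k' hk
  induction k' with
  | zero =>
      intro j _
      have : k = 0 := Nat.le_zero.1 hk
      subst this; rfl
  | succ k' ih =>
      intro j hj
      rcases Nat.lt_or_ge k (k' + 1) with h | h
      · have hk' : k ≤ k' := by omega
        rw [← ih hk' j hj]
        exact (hτ k').2 j (by rw [Tpath_snd S φ hτ k']; omega)
      · have : k = k' + 1 := by omega
        subst this; rfl

lemma proj_mem_QS {τ : ℕ → (T' S φ).V} (hτ : (T' S φ).IsPath τ) :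
    (fun k => proj S φ (τ k)) ∈ QS S φ := by
  set n := (τ 0).2 with hn
  have hu : (fun j => (τ j).1.1 j) ∈ QS S φ := by
    refine QS_cl S φ fun m => ⟨(τ m).1.1, (τ m).1.2, fun j hj => ?_⟩
    exact Tpath_agree S φ hτ j m (le_of_lt hj) j (by omega)
  have := QS_suffix S φ hu n
  have heq : (fun k => proj S φ (τ k)) = fun k => (τ (k + n)).1.1 (k + n) := by
    funext k
    show (τ k).1.1 ((τ k).2) = (τ (k + n)).1.1 (k + n)
    rw [Tpath_snd S φ hτ k, show k + n = n + k by omega]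
    exact (Tpath_agree S φ hτ k (n + k) (by omega) (n + k) (by omega)).symm
  rw [heq]
  exact this

/-- reverse construction: extend a vertex of `T'` by a Q-path -/
noncomputable def extPath (p : (T' S φ).V) (w : ℕ → S.V) (hw : w ∈ QS S φ)
    (h0 : w 0 = proj S φ p) : ℕ → (T' S φ).V :=
  fun k => match k with
  | 0 => p
  | k + 1 => (⟨splice S p.1.1 w p.2,
      QS_splice S φ p.1.2 hw h0⟩, p.2 + (k + 1))

lemma extPath_isPath (p : (T' S φ).V) (w : ℕ → S.V) (hw : w ∈ QS S φ)
    (h0 : w 0 = proj S φ p) : (T' S φ).IsPath (extPath S φ p w hw h0) := by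
  have hwp : S.IsPath w := QS_paths S φ w hw
  have hpp : S.IsPath p.1.1 := QS_paths S φ p.1.1 p.1.2
  intro i
  match i with
  | 0 =>
      refine ⟨rfl, fun j hj => ?_⟩
      exact splice_isPath' S hpp hwp h0 j hj
  | i + 1 => exact ⟨rfl, fun j _ => rfl⟩

lemma extPath_zero (p : (T' S φ).V) (w : ℕ → S.V) (hw : w ∈ QS S φ)
    (h0 : w 0 = proj S φ p) : extPath S φ p w hw h0 0 = p := rfl

lemma extPath_proj (p : (T' S φ).V) (w : ℕ → S.V) (hw : w ∈ QS S φ)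
    (h0 : w 0 = proj S φ p) :
    (fun k => proj S φ (extPath S φ p w hw h0 k)) = w := by
  funext k
  match k with
  | 0 => exact h0.symm
  | k + 1 =>
      show splice S p.1.1 w p.2 (p.2 + (k+1)) = w (k+1)
      exact splice_suffix S p.1.1 w p.2 (k+1)

lemma proj_update (As' : ℕ → ℕ → (T' S φ).V) (x : ℕ) (τ : ℕ → (T' S φ).V) :
    (fun v i => proj S φ (Function.update As' x τ v i)) =
      Function.update (fun v i => proj S φ (As' v i)) x (fun i => proj S φ (τ i)) := by
  funext v
  rcases eq_or_ne v x with rfl | hv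
  · rw [Function.update_self, Function.update_self]
  · rw [Function.update_of_ne hv, Function.update_of_ne hv]

lemma update_isPath {As' : ℕ → ℕ → (T' S φ).V} (hAs : ∀ v, (T' S φ).IsPath (As' v))
    {x : ℕ} {τ : ℕ → (T' S φ).V} (hτ : (T' S φ).IsPath τ) :
    ∀ v, (T' S φ).IsPath (Function.update As' x τ v) := by
  intro v
  rcases eq_or_ne v x with rfl | hv
  · rw [Function.update_self]; exact hτ
  · rw [Function.update_of_ne hv]; exact hAs v

lemma corr : ∀ ψ : CTL AP, ψ ∈ subs φ → ∀ (As' : ℕ → ℕ → (T' S φ).V) (r : ℕ),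
    (∀ v, (T' S φ).IsPath (As' v)) →
    (ψ.sat (T' S φ) As' r ↔ satQ S (QS S φ) ψ (fun v i => proj S φ (As' v i)) r) := by
  intro ψ
  induction ψ with
  | atom a x => intro _ As' r _; exact Iff.rfl
  | neg ψ ih =>
      intro h As' r hAs
      exact not_congr (ih (subs_trans h (List.mem_cons_of_mem _ (self_mem_subs ψ))) As' r hAs)
  | disj ψ χ ihψ ihχ =>
      intro h As' r hAs
      have h1 : ψ ∈ subs φ :=
        subs_trans h (List.mem_cons_of_mem _ (List.mem_append.2 (Or.inl (self_mem_subs ψ))))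
      have h2 : χ ∈ subs φ :=
        subs_trans h (List.mem_cons_of_mem _ (List.mem_append.2 (Or.inr (self_mem_subs χ))))
      exact or_congr (ihψ h1 As' r hAs) (ihχ h2 As' r hAs)
  | next ψ ih =>
      intro h As' r hAs
      exact ih (subs_trans h (List.mem_cons_of_mem _ (self_mem_subs ψ))) _ r
        (fun v => shift_isPath (hAs v) 1)
  | untl ψ χ ihψ ihχ =>
      intro h As' r hAs
      have h1 : ψ ∈ subs φ :=
        subs_trans h (List.mem_cons_of_mem _ (List.mem_append.2 (Or.inl (self_mem_subs ψ))))
      have h2 : χ ∈ subs φ :=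
        subs_trans h (List.mem_cons_of_mem _ (List.mem_append.2 (Or.inr (self_mem_subs χ))))
      refine exists_congr fun j => and_congr ?_ ?_
      · exact ihχ h2 _ r (fun v => shift_isPath (hAs v) j)
      · exact forall_congr' fun j' => forall_congr' fun _ =>
          ihψ h1 _ r (fun v => shift_isPath (hAs v) j')
  | ex x ψ ih =>
      intro h As' r hAs
      have h1 : ψ ∈ subs φ := subs_trans h (List.mem_cons_of_mem _ (self_mem_subs ψ))
      constructor
      · rintro ⟨τ, hτpath, hτ0, hsat⟩
        refine ⟨fun k => proj S φ (τ k), proj_mem_QS S φ hτpath, (by show proj S φ (τ 0) = proj S φ (As' r 0); rw [hτ0]), ?_⟩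
        rw [← proj_update]
        exact (ih h1 _ x (update_isPath S φ hAs hτpath)).1 hsat
      · rintro ⟨w, hwQ, hw0, hsat⟩
        refine ⟨extPath S φ (As' r 0) w hwQ hw0,
          extPath_isPath S φ _ w hwQ hw0, rfl, ?_⟩
        refine (ih h1 _ x (update_isPath S φ hAs (extPath_isPath S φ _ w hwQ hw0))).2 ?_
        rw [proj_update, extPath_proj]
        exact hsat
  | all x ψ ih =>
      intro h As' r hAs
      have h1 : ψ ∈ subs φ := subs_trans h (List.mem_cons_of_mem _ (self_mem_subs ψ))
      constructor
      · intro hall w hwQ hw0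
        have := hall (extPath S φ (As' r 0) w hwQ hw0)
          (extPath_isPath S φ _ w hwQ hw0) rfl
        have := (ih h1 _ x (update_isPath S φ hAs (extPath_isPath S φ _ w hwQ hw0))).1 this
        rwa [proj_update, extPath_proj] at this
      · intro hall τ hτpath hτ0
        have := hall (fun k => proj S φ (τ k)) (proj_mem_QS S φ hτpath) (by show proj S φ (τ 0) = proj S φ (As' r 0); rw [hτ0])
        refine (ih h1 _ x (update_isPath S φ hAs hτpath)).2 ?_
        rw [proj_update]
        exact this

open Cardinal in
lemma mk_stepSet_le (X : Set (ℕ → S.V)) (hX : #X ≤ continuum) :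
    #(stepSet S φ X) ≤ continuum := by
  have himg : #({p | ∃ c g, (∀ k : ℕ, g k ∈ X) ∧ p = Op S φ c g} : Set (ℕ → S.V)) ≤
      continuum := by
    have hsurj : Function.Surjective
        (fun cg : (ℕ × ℕ × ℕ) × (ℕ → X) =>
          (⟨Op S φ cg.1 (fun k => (cg.2 k).1),
            ⟨cg.1, fun k => (cg.2 k).1, fun k => (cg.2 k).2, rfl⟩⟩ :
            {p | ∃ c g, (∀ k : ℕ, g k ∈ X) ∧ p = Op S φ c g})) := by
      rintro ⟨p, c, g, hg, rfl⟩
      exact ⟨(c, fun k => ⟨g k, hg k⟩), rfl⟩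
    have h1 : #({p | ∃ c g, (∀ k : ℕ, g k ∈ X) ∧ p = Op S φ c g} : Set (ℕ → S.V)) ≤
        #((ℕ × ℕ × ℕ) × (ℕ → X)) := mk_le_of_surjective hsurj
    have h2 : #((ℕ × ℕ × ℕ) × (ℕ → X)) = #(ℕ × ℕ × ℕ) * (#X ^ ℵ₀) := by
      rw [mk_prod, lift_id, lift_id, ← power_def, mk_nat]
    have h3 : #(ℕ × ℕ × ℕ) ≤ continuum := by
      have : #(ℕ × ℕ × ℕ) = ℵ₀ := by simp [mk_prod]
      rw [this]; exact aleph0_le_continuum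
    have h4 : #X ^ ℵ₀ ≤ continuum := by
      calc #X ^ ℵ₀ ≤ continuum ^ ℵ₀ := power_le_power_right hX
        _ = continuum := continuum_power_aleph0
    calc #({p | ∃ c g, (∀ k : ℕ, g k ∈ X) ∧ p = Op S φ c g} : Set (ℕ → S.V))
        ≤ #(ℕ × ℕ × ℕ) * (#X ^ ℵ₀) := h2 ▸ h1
      _ ≤ continuum * continuum := mul_le_mul' h3 h4
      _ = continuum := mul_eq_self aleph0_le_continuum
  calc #(stepSet S φ X) ≤ #({rho0 S} : Set (ℕ → S.V)) +
        #({p | ∃ c g, (∀ k : ℕ, g k ∈ X) ∧ p = Op S φ c g} : Set (ℕ → S.V)) :=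
        mk_union_le _ _
    _ ≤ continuum + continuum := by
        refine add_le_add ?_ himg
        rw [mk_singleton]; exact one_le_aleph0.trans aleph0_le_continuum
    _ = continuum := add_eq_self aleph0_le_continuum

open Cardinal in
lemma mk_iUnion_A_le (α : Ordinal.{0}) (hα : α ≤ (Cardinal.aleph 1).ord)
    (h : ∀ β < α, #(A S φ β) ≤ continuum) :
    #(⋃ β : {β // β < α}, A S φ β.1) ≤ continuum := by
  rcases eq_or_ne α 0 with rfl | hne
  · have : (⋃ β : {β : Ordinal.{0} // β < 0}, A S φ β.1) = ∅ := by
      apply Set.iUnion_eq_empty.2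
      rintro ⟨β, hβ⟩
      exact absurd hβ (not_lt_of_ge (zero_le (a := β)))
    rw [this]; simp
  · have : Nonempty {β : Ordinal.{0} // β < α} :=
      ⟨⟨0, pos_iff_ne_zero.2 hne⟩⟩
    have hls := mk_iUnion_le_lift (fun β : {β // β < α} => A S φ β.1)
    have hι : #({β : Ordinal.{0} // β < α}) = Cardinal.lift.{1, 0} α.card :=
      Ordinal.mk_Iio_ordinal α
    have hcard : α.card ≤ continuum :=
      le_trans (by simpa [Cardinal.card_ord] using Ordinal.card_le_card hα)
        aleph_one_le_continuum
    have hι2 : Cardinal.lift.{0, 1} #({β : Ordinal.{0} // β < α}) ≤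
        Cardinal.lift.{1, 0} continuum := by
      rw [hι, Cardinal.lift_lift]
      exact Cardinal.lift_le.2 hcard
    have hsup : (⨆ β : {β // β < α}, Cardinal.lift.{1, 0} #(A S φ β.1)) ≤
        Cardinal.lift.{1, 0} continuum :=
      ciSup_le' fun β => Cardinal.lift_le.2 (h β.1 β.2)
    have hmul : Cardinal.lift.{1, 0} continuum * Cardinal.lift.{1, 0} continuum =
        Cardinal.lift.{1, 0} continuum := by
      rw [← Cardinal.lift_mul, mul_eq_self aleph0_le_continuum]
    have : Cardinal.lift.{1, 0} #(⋃ β : {β // β < α}, A S φ β.1) ≤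
        Cardinal.lift.{1, 0} continuum :=
      hls.trans (le_trans (mul_le_mul' hι2 hsup) hmul.le)
    exact Cardinal.lift_le.1 this

open Cardinal in
lemma mk_A_le : ∀ α : Ordinal.{0}, α ≤ (Cardinal.aleph 1).ord →
    #(A S φ α) ≤ continuum := by
  intro α
  induction α using Ordinal.induction with
  | _ α ih =>
    intro hα
    rw [A_eq]
    exact mk_stepSet_le S φ _
      (mk_iUnion_A_le S φ α hα (fun β hβ => ih β hβ ((le_of_lt hβ).trans hα)))

open Cardinal in
lemma mk_QS_le : #(QS S φ) ≤ continuum :=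
  mk_iUnion_A_le S φ _ le_rfl (fun β hβ => mk_A_le S φ β hβ.le)

open Cardinal in
lemma mk_T'_le : #((T' S φ).V) ≤ continuum := by
  have : #((T' S φ).V) = #({ρ // ρ ∈ QS S φ} × ℕ) := rfl
  rw [this, mk_prod, lift_id, lift_id, mk_nat]
  calc #{ρ // ρ ∈ QS S φ} * ℵ₀ ≤ continuum * continuum :=
        mul_le_mul' (mk_QS_le S φ) aleph0_le_continuum
    _ = continuum := mul_eq_self aleph0_le_continuum

lemma T'_models (hS : CModels S φ) : CModels (T' S φ) φ := by
  intro ρ' hpath h0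
  refine (corr S φ φ (self_mem_subs φ) (fun _ => ρ') 0 (fun _ => hpath)).2 ?_
  have hw : (fun k => proj S φ (ρ' k)) ∈ QS S φ := proj_mem_QS S φ hpath
  refine (reflect S φ φ (self_mem_subs φ) _ 0 (fun _ => hw)).2 ?_
  have hw0 : proj S φ (ρ' 0) = S.vI := by rw [h0]; rfl
  exact hS (fun k => proj S φ (ρ' k)) (QS_paths S φ _ hw) hw0

end Small

/-- **Small model property for HyperCTL***: every satisfiable HyperCTL* sentence
has a model whose set of vertices has cardinality at most `𝔠`. -/
theorem hyperctl_model_le_continuum (AP : Type) [Fintype AP] (φ : CTL AP)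
    (hφ : φ.IsSentence) (hsat : ∃ S : TS AP, CModels S φ) :
    ∃ S : TS AP, CModels S φ ∧ Cardinal.mk S.V ≤ Cardinal.continuum := by
  obtain ⟨S, hS⟩ := hsat
  exact ⟨Small.T' S φ, Small.T'_models S φ hS, Small.mk_T'_le S φ⟩
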